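/- arXiv:1207.5488 — 5 statements merged into one kernel-verified Lean document; each statement's English description precedes it below -/
import Mathlib

section
/- Let G be a categorical group with object group G = Obj(𝐆) and let H = ker s ⊆ Mor(𝐆) be the kernel of the source homomorphism. Define τ : H → G by τ(θ) = t(θ) (the target map restricted to H), and α : G → Aut(H) by α(g)(θ) = 1_g · θ · 1_{g⁻¹}. Then (G, H, α, τ) is a crossed module: τ(α(g)h) = g τ(h) g⁻¹ and α(τ(h))(h') = h h' h⁻¹ for all g ∈ G and h, h' ∈ H. -/
/-- A categorical group: a category whose objects and morphisms form groups,
with source, target and identity-assigning maps being group homomorphisms,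
satisfying the exchange law coming from functoriality of the product. -/
structure CatGroup (O M : Type*) [Group O] [Group M] where
  s : M →* O
  t : M →* O
  e : O →* M
  s_e : ∀ x, s (e x) = x
  t_e : ∀ x, t (e x) = x
  comp : M → M → M
  s_comp : ∀ g f, t f = s g → s (comp g f) = s f
  t_comp : ∀ g f, t f = s g → t (comp g f) = t g
  comp_e : ∀ f, comp f (e (s f)) = f
  e_comp : ∀ f, comp (e (t f)) f = f
  comp_assoc : ∀ f g h, t f = s g → t g = s h →
    comp h (comp g f) = comp (comp h g) f
  exchange : ∀ f f' g g', t f' = s f → t g' = s g →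
    comp (f * g) (f' * g') = comp f f' * comp g g'

/-- If `s a = t h`, then composition is given by the group formula
`comp a h = a * e(t h)⁻¹ * h`. -/
lemma CatGroup.comp_eq {O M : Type*} [Group O] [Group M] (K : CatGroup O M)
    (a h : M) (hah : K.s a = K.t h) :
    K.comp a h = a * (K.e (K.t h))⁻¹ * h := by
  have h1 : K.s (a * (K.e (K.t h))⁻¹) = 1 := by
    simp [map_mul, map_inv, K.s_e, hah]
  have hex := K.exchange (a * (K.e (K.t h))⁻¹) (K.e 1) (K.e (K.t h)) h
    (by simp [K.t_e, h1]) (by simp [K.s_e])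
  have h2 : K.comp (a * (K.e (K.t h))⁻¹) (K.e 1) = a * (K.e (K.t h))⁻¹ := by
    have := K.comp_e (a * (K.e (K.t h))⁻¹); rwa [h1] at this
  rw [h2, K.e_comp, map_one, one_mul, mul_assoc, inv_mul_cancel, mul_one] at hex
  rw [hex, mul_assoc]

/-- From a categorical group one gets a crossed module: with `H = ker s`,
`τ = t|_H` and `α(g)θ = 1_g·θ·1_{g⁻¹}`, the Peiffer identities hold:
`τ(α(g)h) = g·τ(h)·g⁻¹` and `α(τ(h))(h') = h·h'·h⁻¹` for `h, h' ∈ ker s`. -/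
theorem stmt4 {O M : Type*} [Group O] [Group M] (K : CatGroup O M) :
    ∀ (g : O) (h h' : M), K.s h = 1 → K.s h' = 1 →
      K.t (K.e g * h * K.e (g⁻¹)) = g * K.t h * g⁻¹ ∧
      K.e (K.t h) * h' * K.e ((K.t h)⁻¹) = h * h' * h⁻¹ := by
  intro g h h' hs hs'
  constructor
  · simp [map_mul, map_inv, K.t_e]
  · -- exchange: comp (e(t h) * h') (h * 1) = comp (e(t h)) h * comp h' 1
    have hex := K.exchange (K.e (K.t h)) h h' (K.e 1)
      (by simp [K.s_e]) (by simp [K.t_e, hs'])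
    have h1 : K.comp h' (K.e 1) = h' := by
      have := K.comp_e h'; rwa [hs'] at this
    rw [K.e_comp, h1] at hex
    have hsa : K.s (K.e (K.t h) * h') = K.t h := by
      simp [map_mul, K.s_e, hs']
    have hc := K.comp_eq (K.e (K.t h) * h') h hsa
    rw [map_one, mul_one] at hex
    rw [hc] at hex
    -- hex : e(t h) * h' * (e(t h))⁻¹ * h = h * h'  (after simp of e 1)
    have := eq_mul_inv_of_mul_eq hex
    simpa [map_inv] using this
end

section
/- Let ρ be a right action of a categorical group Z on a category P (a functor P × Z → P that is a right action on objects and on morphisms), with the action on morphisms free. If F, H ∈ Mor(P) with H ∘ F defined, and F' = ρ(F, φ), H' = ρ(H, ψ) for some φ, ψ ∈ Mor(Z) such that H' ∘ F' is also defined, then ψ ∘ φ is defined in Mor(Z) and H' ∘ F' = ρ(H ∘ F, ψ ∘ φ); in particular H' ∘ F' lies in the Mor(Z)-orbit of H ∘ F. -/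
/-- A (small, set-based) category: sets of objects and morphisms with
source, target, identity and composition maps. `comp g f` means `g ∘ f`. -/
structure PreCat (O M : Type*) where
  s : M → O
  t : M → O
  e : O → M
  s_e : ∀ x, s (e x) = x
  t_e : ∀ x, t (e x) = x
  comp : M → M → M
  s_comp : ∀ g f, t f = s g → s (comp g f) = s f
  t_comp : ∀ g f, t f = s g → t (comp g f) = t g
  comp_e : ∀ f, comp f (e (s f)) = f
  e_comp : ∀ f, comp (e (t f)) f = f
  comp_assoc : ∀ f g h, t f = s g → t g = s h →
    comp h (comp g f) = comp (comp h g) f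

/-- A right action of a categorical group `Z` on a category `P`: a functor
`P × Z → P` that is a right group action on objects and on morphisms. -/
structure CatAction {PO PM ZO ZM : Type*} [Group ZO] [Group ZM]
    (P : PreCat PO PM) (Z : CatGroup ZO ZM) where
  objAct : PO → ZO → PO
  morAct : PM → ZM → PM
  objAct_one : ∀ p, objAct p 1 = p
  objAct_mul : ∀ p z z', objAct p (z * z') = objAct (objAct p z) z'
  morAct_one : ∀ F, morAct F 1 = F
  morAct_mul : ∀ F φ φ', morAct F (φ * φ') = morAct (morAct F φ) φ'
  s_act : ∀ F φ, P.s (morAct F φ) = objAct (P.s F) (Z.s φ)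
  t_act : ∀ F φ, P.t (morAct F φ) = objAct (P.t F) (Z.t φ)
  e_act : ∀ p z, morAct (P.e p) (Z.e z) = P.e (objAct p z)
  comp_act : ∀ F H φ ψ, P.t F = P.s H → Z.t φ = Z.s ψ →
    morAct (P.comp H F) (Z.comp ψ φ) = P.comp (morAct H ψ) (morAct F φ)

/-- If `H ∘ F` is defined, `F' = F·φ`, `H' = H·ψ` and `H' ∘ F'` is defined, then
`ψ ∘ φ` is defined and `H' ∘ F' = (H ∘ F)·(ψ ∘ φ)`; in particular `H' ∘ F'` lies
in the `Mor(Z)`-orbit of `H ∘ F`. -/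
theorem stmt10 {PO PM ZO ZM : Type*} [Group ZO] [Group ZM]
    (P : PreCat PO PM) (Z : CatGroup ZO ZM) (A : CatAction P Z)
    (hObjFree : ∀ p z z', A.objAct p z = A.objAct p z' → z = z')
    (hMorFree : ∀ F φ φ', A.morAct F φ = A.morAct F φ' → φ = φ')
    (F H F' H' : PM) (φ ψ : ZM)
    (hc : P.t F = P.s H)
    (hF' : F' = A.morAct F φ) (hH' : H' = A.morAct H ψ)
    (hc' : P.t F' = P.s H') :
    Z.t φ = Z.s ψ ∧
    P.comp H' F' = A.morAct (P.comp H F) (Z.comp ψ φ) ∧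
    ∃ χ : ZM, P.comp H' F' = A.morAct (P.comp H F) χ := by
  subst hF' hH'
  rw [A.t_act, A.s_act, hc] at hc'
  have hts : Z.t φ = Z.s ψ := hObjFree _ _ _ hc'
  have key := (A.comp_act F H φ ψ hc hts).symm
  exact ⟨hts, key, Z.comp ψ φ, key⟩
end

section
/- Let ρ be a right action of a categorical group Z on a category P, free on both objects and morphisms. Then there is a well-defined quotient category B with Obj(B) = Obj(P)/Obj(Z) and Mor(B) = Mor(P)/Mor(Z), with composition given by [H] ∘ [F] = [H ∘ F], and the quotient functor π : P → B together with the action of Z makes π a principal categorical bundle: π is surjective on objects and morphisms, the action is free, and it is transitive on each fiber π⁻¹(b) of objects and each fiber π⁻¹(φ) of morphisms. -/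
/-- The `Obj(Z)`-orbit relation on objects of `P`. -/
def objRel {PO PM ZO ZM : Type*} [Group ZO] [Group ZM]
    {P : PreCat PO PM} {Z : CatGroup ZO ZM} (A : CatAction P Z) :
    PO → PO → Prop := fun p q => ∃ z, A.objAct p z = q

/-- The `Mor(Z)`-orbit relation on morphisms of `P`. -/
def morRel {PO PM ZO ZM : Type*} [Group ZO] [Group ZM]
    {P : PreCat PO PM} {Z : CatGroup ZO ZM} (A : CatAction P Z) :
    PM → PM → Prop := fun F G => ∃ φ, A.morAct F φ = G


section Aux

variable {PO PM ZO ZM : Type*} [Group ZO] [Group ZM]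
    {P : PreCat PO PM} {Z : CatGroup ZO ZM} (A : CatAction P Z)

lemma objRel_equiv : Equivalence (objRel A) := by
  constructor
  · intro p; exact ⟨1, A.objAct_one p⟩
  · rintro p q ⟨z, rfl⟩
    exact ⟨z⁻¹, by rw [← A.objAct_mul, mul_inv_cancel, A.objAct_one]⟩
  · rintro p q r ⟨z, rfl⟩ ⟨w, rfl⟩
    exact ⟨z * w, A.objAct_mul p z w⟩

lemma morRel_equiv : Equivalence (morRel A) := by
  constructor
  · intro F; exact ⟨1, A.morAct_one F⟩
  · rintro F G ⟨φ, rfl⟩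
    exact ⟨φ⁻¹, by rw [← A.morAct_mul, mul_inv_cancel, A.morAct_one]⟩
  · rintro F G H ⟨φ, rfl⟩ ⟨ψ, rfl⟩
    exact ⟨φ * ψ, A.morAct_mul F φ ψ⟩

lemma objRel_of_mk_eq {p q : PO}
    (h : Quot.mk (objRel A) p = Quot.mk (objRel A) q) : objRel A p q :=
  ((objRel_equiv A).eqvGen_iff).mp (Quot.eqvGen_exact h)

lemma morRel_of_mk_eq {F G : PM}
    (h : Quot.mk (morRel A) F = Quot.mk (morRel A) G) : morRel A F G :=
  ((morRel_equiv A).eqvGen_iff).mp (Quot.eqvGen_exact h)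

/-- Quotient source map. -/
def qs : Quot (morRel A) → Quot (objRel A) :=
  Quot.lift (fun F => Quot.mk (objRel A) (P.s F)) (by
    rintro F _ ⟨φ, rfl⟩
    exact Quot.sound ⟨Z.s φ, (A.s_act F φ).symm⟩)

/-- Quotient target map. -/
def qt : Quot (morRel A) → Quot (objRel A) :=
  Quot.lift (fun F => Quot.mk (objRel A) (P.t F)) (by
    rintro F _ ⟨φ, rfl⟩
    exact Quot.sound ⟨Z.t φ, (A.t_act F φ).symm⟩)

/-- Quotient identity map. -/
def qe : Quot (objRel A) → Quot (morRel A) :=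
  Quot.lift (fun p => Quot.mk (morRel A) (P.e p)) (by
    rintro p _ ⟨z, rfl⟩
    exact Quot.sound ⟨Z.e z, A.e_act p z⟩)

/-- Well-definedness of composition on quotients (on the composable locus). -/
lemma comp_wd (hObjFree : ∀ p z z', A.objAct p z = A.objAct p z' → z = z')
    {H F H' F' : PM}
    (hH : Quot.mk (morRel A) H = Quot.mk (morRel A) H')
    (hF : Quot.mk (morRel A) F = Quot.mk (morRel A) F')
    (h1 : P.t F = P.s H) (h2 : P.t F' = P.s H') :
    Quot.mk (morRel A) (P.comp H F) = Quot.mk (morRel A) (P.comp H' F') := by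
  obtain ⟨ψ, rfl⟩ := morRel_of_mk_eq A hH
  obtain ⟨φ, rfl⟩ := morRel_of_mk_eq A hF
  have hts : Z.t φ = Z.s ψ := by
    apply hObjFree (P.t F)
    rw [← A.t_act F φ, h2, A.s_act H ψ, ← h1]
  exact Quot.sound ⟨Z.comp ψ φ, A.comp_act F H φ ψ h1 hts⟩

open Classical in
/-- Composition on quotients, defined via choice on the composable locus. -/
noncomputable def qcomp : Quot (morRel A) → Quot (morRel A) → Quot (morRel A) :=
  fun b a =>
    if h : ∃ q : PM × PM, Quot.mk (morRel A) q.1 = b ∧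
        Quot.mk (morRel A) q.2 = a ∧ P.t q.2 = P.s q.1 then
      Quot.mk (morRel A) (P.comp h.choose.1 h.choose.2)
    else b

lemma qcomp_mk (hObjFree : ∀ p z z', A.objAct p z = A.objAct p z' → z = z')
    {H F : PM} (h : P.t F = P.s H) :
    qcomp A (Quot.mk (morRel A) H) (Quot.mk (morRel A) F)
      = Quot.mk (morRel A) (P.comp H F) := by
  have hex : ∃ q : PM × PM, Quot.mk (morRel A) q.1 = Quot.mk (morRel A) H ∧
      Quot.mk (morRel A) q.2 = Quot.mk (morRel A) F ∧ P.t q.2 = P.s q.1 :=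
    ⟨(H, F), rfl, rfl, h⟩
  rw [qcomp, dif_pos hex]
  exact comp_wd A hObjFree hex.choose_spec.1 hex.choose_spec.2.1
    hex.choose_spec.2.2 h

/-- Composable representatives for a pair with matching quotient target/source. -/
lemma exists_composable {a b : Quot (morRel A)} (h : qt A a = qs A b) :
    ∃ H F : PM, Quot.mk (morRel A) H = b ∧ Quot.mk (morRel A) F = a ∧
      P.t F = P.s H := by
  induction a using Quot.ind with | _ F =>
  induction b using Quot.ind with | _ H =>
  obtain ⟨z, hz⟩ := objRel_of_mk_eq A h
  refine ⟨H, A.morAct F (Z.e z), rfl, (Quot.sound ⟨Z.e z, rfl⟩).symm, ?_⟩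
  rw [A.t_act, Z.t_e, hz]

end Aux

/-- Given a free right action of a categorical group `Z` on a category `P`, there is a
well-defined quotient category `B` with objects `Obj(P)/Obj(Z)` and morphisms
`Mor(P)/Mor(Z)`, composition `[H] ∘ [F] = [H ∘ F]`, and the quotient functor
`π : P → B` together with the action makes `π` a principal categorical bundle:
`π` is surjective on objects and morphisms, and the (free) action is transitive on
each object fiber and each morphism fiber. -/
theorem stmt11 {PO PM ZO ZM : Type*} [Group ZO] [Group ZM]
    (P : PreCat PO PM) (Z : CatGroup ZO ZM) (A : CatAction P Z)
    (hObjFree : ∀ p z z', A.objAct p z = A.objAct p z' → z = z')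
    (hMorFree : ∀ F φ φ', A.morAct F φ = A.morAct F φ' → φ = φ') :
    ∃ B : PreCat (Quot (objRel A)) (Quot (morRel A)),
      (∀ F : PM, B.s (Quot.mk (morRel A) F) = Quot.mk (objRel A) (P.s F)) ∧
      (∀ F : PM, B.t (Quot.mk (morRel A) F) = Quot.mk (objRel A) (P.t F)) ∧
      (∀ p : PO, B.e (Quot.mk (objRel A) p) = Quot.mk (morRel A) (P.e p)) ∧
      (∀ F H : PM, P.t F = P.s H →
        B.comp (Quot.mk (morRel A) H) (Quot.mk (morRel A) F)
          = Quot.mk (morRel A) (P.comp H F)) ∧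
      Function.Surjective (Quot.mk (objRel A)) ∧
      Function.Surjective (Quot.mk (morRel A)) ∧
      (∀ p q : PO, Quot.mk (objRel A) p = Quot.mk (objRel A) q →
        ∃ z, A.objAct p z = q) ∧
      (∀ F G : PM, Quot.mk (morRel A) F = Quot.mk (morRel A) G →
        ∃ φ, A.morAct F φ = G) := by
  classical
  refine ⟨{ s := qs A, t := qt A, e := qe A, comp := qcomp A
            s_e := ?_, t_e := ?_
            s_comp := ?_, t_comp := ?_, comp_e := ?_, e_comp := ?_
            comp_assoc := ?_ },
    fun F => rfl, fun F => rfl, fun p => rfl,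
    fun F H h => qcomp_mk A hObjFree h,
    fun b => Quot.inductionOn b fun a => ⟨a, rfl⟩,
    fun b => Quot.inductionOn b fun a => ⟨a, rfl⟩,
    fun p q h => objRel_of_mk_eq A h,
    fun F G h => morRel_of_mk_eq A h⟩
  · intro x
    induction x using Quot.ind with | _ p =>
    show Quot.mk _ (P.s (P.e p)) = _
    rw [P.s_e]
  · intro x
    induction x using Quot.ind with | _ p =>
    show Quot.mk _ (P.t (P.e p)) = _
    rw [P.t_e]
  · intro g f h
    obtain ⟨H, F, hH, hF, hc⟩ := exists_composable A h
    rw [← hH, ← hF, qcomp_mk A hObjFree hc]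
    show Quot.mk _ (P.s (P.comp H F)) = qs A (Quot.mk _ F)
    rw [P.s_comp H F hc]; rfl
  · intro g f h
    obtain ⟨H, F, hH, hF, hc⟩ := exists_composable A h
    rw [← hH, ← hF, qcomp_mk A hObjFree hc]
    show Quot.mk _ (P.t (P.comp H F)) = qt A (Quot.mk _ H)
    rw [P.t_comp H F hc]; rfl
  · intro f
    induction f using Quot.ind with | _ F =>
    show qcomp A _ (qe A (Quot.mk _ (P.s F))) = _
    have hc : P.t (P.e (P.s F)) = P.s F := P.t_e _
    show qcomp A (Quot.mk _ F) (Quot.mk _ (P.e (P.s F))) = _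
    rw [qcomp_mk A hObjFree hc, P.comp_e]
  · intro f
    induction f using Quot.ind with | _ F =>
    have hc : P.t F = P.s (P.e (P.t F)) := (P.s_e _).symm
    show qcomp A (Quot.mk _ (P.e (P.t F))) (Quot.mk _ F) = _
    rw [qcomp_mk A hObjFree hc, P.e_comp]
  · intro f g h hfg hgh
    obtain ⟨G₁, F₁, hG₁, hF₁, hc₁⟩ := exists_composable A hfg
    obtain ⟨H₂, G₂, hH₂, hG₂, hc₂⟩ := exists_composable A (hG₁ ▸ hgh)
    -- adjust F₁ to be composable with G₂
    obtain ⟨φ, hφ⟩ := morRel_of_mk_eq A hG₂.symm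
    set F₂ := A.morAct F₁ (Z.e (Z.s φ)) with hF₂def
    have hF₂ : Quot.mk (morRel A) F₂ = f := (Quot.sound ⟨Z.e (Z.s φ), rfl⟩).symm.trans hF₁
    have hc₃ : P.t F₂ = P.s G₂ := by
      rw [hF₂def, A.t_act, Z.t_e, hc₁, ← hφ, A.s_act]
    have hc₄ : P.t (P.comp G₂ F₂) = P.s H₂ := by rw [P.t_comp G₂ F₂ hc₃, hc₂]
    have hc₅ : P.t F₂ = P.s (P.comp H₂ G₂) := by rw [P.s_comp H₂ G₂ hc₂, hc₃]
    rw [← hH₂, ← hG₁, ← hG₂, ← hF₂, qcomp_mk A hObjFree hc₃, qcomp_mk A hObjFree hc₂,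
      qcomp_mk A hObjFree hc₄, qcomp_mk A hObjFree hc₅,
      P.comp_assoc F₂ G₂ H₂ hc₃ hc₂]
end

section
/- In the decorated path category, the right action of morphisms φ of the categorical group (given by (γ̃, θ)·φ = (γ̃·s(φ), φ⁻¹·θ·1_{s(φ)})) is functorial with respect to composition: for composable φ₂ ∘ φ₁ in the categorical group and composable decorated morphisms, ((γ̃₂, θ₂) ∘ (γ̃₁, θ₁))·(φ₂ ∘ φ₁) = ((γ̃₂, θ₂)·φ₂) ∘ ((γ̃₁, θ₁)·φ₁). -/

lemma comp_eq_left {O M : Type*} [Group O] [Group M] (K : CatGroup O M)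
    (g f : M) (h : K.t f = K.s g) :
    K.comp g f = g * (K.e (K.t f))⁻¹ * f := by
  have h1 : K.comp g f = K.comp (g * 1) (K.e (K.t f) * ((K.e (K.t f))⁻¹ * f)) := by
    group
  rw [h1, K.exchange g (K.e (K.t f)) 1 ((K.e (K.t f))⁻¹ * f)]
  · have hc1 : K.comp g (K.e (K.t f)) = g := by rw [h, K.comp_e]
    rw [hc1]
    have ht : K.t ((K.e (K.t f))⁻¹ * f) = 1 := by
      simp [map_mul, map_inv, K.t_e]
    have hs1 : K.s (1 : M) = 1 := map_one K.s
    have : K.comp (1 : M) ((K.e (K.t f))⁻¹ * f)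
        = K.comp (K.e (K.t ((K.e (K.t f))⁻¹ * f))) ((K.e (K.t f))⁻¹ * f) := by
      rw [ht, map_one]
    rw [this, K.e_comp]; group
  · rw [K.t_e, h]
  · simp [map_mul, map_inv, K.t_e, map_one]

lemma comp_eq_right {O M : Type*} [Group O] [Group M] (K : CatGroup O M)
    (g f : M) (h : K.t f = K.s g) :
    K.comp g f = f * (K.e (K.t f))⁻¹ * g := by
  have h1 : K.comp g f = K.comp (K.e (K.t f) * ((K.e (K.t f))⁻¹ * g)) (f * 1) := by
    group
  rw [h1, K.exchange (K.e (K.t f)) f ((K.e (K.t f))⁻¹ * g) 1]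
  · rw [K.e_comp]
    have hsx : K.s ((K.e (K.t f))⁻¹ * g) = 1 := by
      simp [map_mul, map_inv, K.s_e, ← h]
    have : K.comp ((K.e (K.t f))⁻¹ * g) (1 : M)
        = K.comp ((K.e (K.t f))⁻¹ * g) (K.e (K.s ((K.e (K.t f))⁻¹ * g))) := by
      rw [hsx, map_one]
    rw [this, K.comp_e]; group
  · rw [K.s_e]
  · simp [map_one, map_inv, K.s_e, ← h]

lemma ker_comm {O M : Type*} [Group O] [Group M] (K : CatGroup O M)
    (ψ χ : M) (ht : K.t ψ = 1) (hs : K.s χ = 1) : χ * ψ = ψ * χ := by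
  have hcomp : K.t ψ = K.s χ := by rw [ht, hs]
  have h1 := comp_eq_left K χ ψ hcomp
  have h2 := comp_eq_right K χ ψ hcomp
  simp only [ht, map_one, inv_one, mul_one] at h1 h2
  rw [← h1, h2]

/-- Functoriality of the decorated right action: with decorated morphisms `(γ̃, θ)`
(`θ ∈ ker s ⊆ Mor(K)`), action `(γ̃, θ)·φ = (γ̃·s(φ), φ⁻¹·θ·1_{s(φ)})` and
composition `(γ̃₂, θ₂) ∘ (γ̃₁, θ₁) = (γ̃₂·t(θ₁) ∘ γ̃₁, θ₂θ₁)`, one has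
`((γ̃₂, θ₂) ∘ (γ̃₁, θ₁))·(φ₂ ∘ φ₁) = ((γ̃₂, θ₂)·φ₂) ∘ ((γ̃₁, θ₁)·φ₁)`
for composable `φ₂ ∘ φ₁` and composable decorated morphisms. -/
theorem stmt15 {O M PO PM : Type*} [Group O] [Group M]
    (K : CatGroup O M) (P : PreCat PO PM)
    (actO : PO → O → PO) (actM : PM → O → PM)
    (actO_one : ∀ x, actO x (1 : O) = x)
    (actO_mul : ∀ x g g', actO x (g * g') = actO (actO x g) g')
    (actM_one : ∀ f, actM f (1 : O) = f)
    (actM_mul : ∀ f g g', actM f (g * g') = actM (actM f g) g')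
    (s_act : ∀ f g, P.s (actM f g) = actO (P.s f) g)
    (t_act : ∀ f g, P.t (actM f g) = actO (P.t f) g)
    (comp_act : ∀ f₁ f₂ g, P.t f₁ = P.s f₂ →
      actM (P.comp f₂ f₁) g = P.comp (actM f₂ g) (actM f₁ g))
    (γ₁ γ₂ : PM) (θ₁ θ₂ φ₁ φ₂ : M)
    (hθ₁ : K.s θ₁ = 1) (hθ₂ : K.s θ₂ = 1)
    (hφ : K.s φ₂ = K.t φ₁)
    (hc : actO (P.t γ₁) ((K.t θ₁)⁻¹) = P.s γ₂) :
    (actM (P.comp (actM γ₂ (K.t θ₁)) γ₁) (K.s (K.comp φ₂ φ₁)),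
      (K.comp φ₂ φ₁)⁻¹ * (θ₂ * θ₁) * K.e (K.s (K.comp φ₂ φ₁)))
    = (P.comp
        (actM (actM γ₂ (K.s φ₂)) (K.t (φ₁⁻¹ * θ₁ * K.e (K.s φ₁))))
        (actM γ₁ (K.s φ₁)),
      (φ₂⁻¹ * θ₂ * K.e (K.s φ₂)) * (φ₁⁻¹ * θ₁ * K.e (K.s φ₁))) := by
  have hs1 : K.s (K.comp φ₂ φ₁) = K.s φ₁ := K.s_comp φ₂ φ₁ hφ.symm
  have ht1 : K.t (φ₁⁻¹ * θ₁ * K.e (K.s φ₁)) = (K.t φ₁)⁻¹ * K.t θ₁ * K.s φ₁ := by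
    simp [map_mul, map_inv, K.t_e]
  have hsγ : P.t γ₁ = P.s (actM γ₂ (K.t θ₁)) := by
    rw [s_act, ← hc, ← actO_mul, inv_mul_cancel, actO_one]
  refine Prod.ext ?_ ?_
  · show actM (P.comp (actM γ₂ (K.t θ₁)) γ₁) (K.s (K.comp φ₂ φ₁)) = _
    rw [hs1, comp_act _ _ _ hsγ, ht1, hφ, ← actM_mul, ← actM_mul,
      show K.t φ₁ * ((K.t φ₁)⁻¹ * K.t θ₁ * K.s φ₁) = K.t θ₁ * K.s φ₁ by group]
  · show (K.comp φ₂ φ₁)⁻¹ * (θ₂ * θ₁) * K.e (K.s (K.comp φ₂ φ₁)) = _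
    rw [hs1, comp_eq_left K φ₂ φ₁ hφ.symm, hφ]
    set A := K.e (K.t φ₁) with hA
    set B := K.e (K.s φ₁) with hB
    have hcomm : (φ₂⁻¹ * θ₂ * A) * (φ₁⁻¹ * A) = (φ₁⁻¹ * A) * (φ₂⁻¹ * θ₂ * A) := by
      refine ker_comm K _ _ ?_ ?_
      · simp [hA, map_mul, map_inv, K.t_e]
      · simp [hA, map_mul, map_inv, K.s_e, hθ₂, hφ]
    have key : φ₁⁻¹ * A * (φ₂⁻¹ * θ₂) = φ₂⁻¹ * θ₂ * A * φ₁⁻¹ := by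
      have h := hcomm
      have h2 : (φ₂⁻¹ * θ₂ * A) * (φ₁⁻¹ * A) * A⁻¹ = (φ₁⁻¹ * A) * (φ₂⁻¹ * θ₂ * A) * A⁻¹ := by
        rw [h]
      group at h2
      group
      exact h2.symm
    calc (φ₂ * A⁻¹ * φ₁)⁻¹ * (θ₂ * θ₁) * B
        = (φ₁⁻¹ * A * (φ₂⁻¹ * θ₂)) * (θ₁ * B) := by group
      _ = (φ₂⁻¹ * θ₂ * A * φ₁⁻¹) * (θ₁ * B) := by rw [key]
      _ = φ₂⁻¹ * θ₂ * A * (φ₁⁻¹ * θ₁ * B) := by group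
end

section
/- Let Z be a categorical group acting on the right on a category P via a functor ρ, with ρ free on objects and morphisms and transitive on fibers of the quotient functor π : P → B. Given a representation ρ_V of Z on a categorical vector space V, the twisted product P ×_ρ V — whose objects are equivalence classes [p, v] under (p, v) ~ (p·k, ρ_V(k⁻¹)v) for k ∈ Obj(Z), and whose morphisms are classes [F, f] under (F, f) ~ (F·φ, ρ_V(φ⁻¹)f) for φ ∈ Mor(Z) — is a well-defined category, with s[F, f] = [s(F), s(f)], t[F, f] = [t(F), t(f)], and composition [H, h] ∘ [F, f] = [H ∘ F, h ∘ f] well-defined on equivalence classes. -/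
/-- Equivalence `(p, v) ~ (p·k, ρ(k⁻¹)v)` on pairs of objects. -/
def twObjRel {PO PM ZO ZM VO : Type*} [Group ZO] [Group ZM]
    {P : PreCat PO PM} {Z : CatGroup ZO ZM} (A : CatAction P Z)
    (rObj : ZO → VO → VO) : PO × VO → PO × VO → Prop :=
  fun p q => ∃ k : ZO, q = (A.objAct p.1 k, rObj k⁻¹ p.2)

/-- Equivalence `(F, f) ~ (F·φ, ρ(φ⁻¹)f)` on pairs of morphisms. -/
def twMorRel {PO PM ZO ZM VM : Type*} [Group ZO] [Group ZM]
    {P : PreCat PO PM} {Z : CatGroup ZO ZM} (A : CatAction P Z)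
    (rMor : ZM → VM → VM) : PM × VM → PM × VM → Prop :=
  fun p q => ∃ φ : ZM, q = (A.morAct p.1 φ, rMor φ⁻¹ p.2)

/-- The twisted product `P ×_ρ V` of a principal categorical bundle with a
representation of its structure categorical group `Z` on a categorical vector
space `V` is a well-defined category: objects are classes `[p, v]`, morphisms are
classes `[F, f]`, with `s[F, f] = [s(F), s(f)]`, `t[F, f] = [t(F), t(f)]`,
identities `[1_p, 1_v]`, and composition `[H, h] ∘ [F, f] = [H ∘ F, h ∘ f]`
well defined on equivalence classes. -/
theorem stmt19 {PO PM ZO ZM VO VM 𝔽 : Type*} [Group ZO] [Group ZM]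
    [Field 𝔽] [AddCommGroup VO] [Module 𝔽 VO] [AddCommGroup VM] [Module 𝔽 VM]
    (P : PreCat PO PM) (Z : CatGroup ZO ZM) (A : CatAction P Z)
    (V : PreCat VO VM)
    (rObj : ZO → VO →ₗ[𝔽] VO) (rMor : ZM → VM →ₗ[𝔽] VM)
    (rObj_one : ∀ v, rObj 1 v = v)
    (rObj_mul : ∀ z z' v, rObj (z * z') v = rObj z (rObj z' v))
    (rMor_one : ∀ f, rMor 1 f = f)
    (rMor_mul : ∀ φ φ' f, rMor (φ * φ') f = rMor φ (rMor φ' f))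
    (r_s : ∀ φ f, V.s (rMor φ f) = rObj (Z.s φ) (V.s f))
    (r_t : ∀ φ f, V.t (rMor φ f) = rObj (Z.t φ) (V.t f))
    (r_e : ∀ z v, rMor (Z.e z) (V.e v) = V.e (rObj z v))
    (r_comp : ∀ φ ψ f g, V.t f = V.s g → Z.t φ = Z.s ψ →
      rMor (Z.comp ψ φ) (V.comp g f) = V.comp (rMor ψ g) (rMor φ f))
    (hObjFree : ∀ p z z', A.objAct p z = A.objAct p z' → z = z')
    (hMorFree : ∀ F φ φ', A.morAct F φ = A.morAct F φ' → φ = φ') :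
    ∃ C : PreCat (Quot (twObjRel A (fun z v => rObj z v)))
        (Quot (twMorRel A (fun φ f => rMor φ f))),
      (∀ (F : PM) (f : VM),
        C.s (Quot.mk (twMorRel A (fun φ f => rMor φ f)) (F, f))
          = Quot.mk (twObjRel A (fun z v => rObj z v)) (P.s F, V.s f)) ∧
      (∀ (F : PM) (f : VM),
        C.t (Quot.mk (twMorRel A (fun φ f => rMor φ f)) (F, f))
          = Quot.mk (twObjRel A (fun z v => rObj z v)) (P.t F, V.t f)) ∧
      (∀ (p : PO) (v : VO),
        C.e (Quot.mk (twObjRel A (fun z v => rObj z v)) (p, v))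
          = Quot.mk (twMorRel A (fun φ f => rMor φ f)) (P.e p, V.e v)) ∧
      (∀ (F H : PM) (f h : VM), P.t F = P.s H → V.t f = V.s h →
        C.comp (Quot.mk (twMorRel A (fun φ f => rMor φ f)) (H, h))
            (Quot.mk (twMorRel A (fun φ f => rMor φ f)) (F, f))
          = Quot.mk (twMorRel A (fun φ f => rMor φ f)) (P.comp H F, V.comp h f)) := by
  classical
  set rO : PO × VO → PO × VO → Prop := twObjRel A (fun z v => rObj z v) with hrOdef
  set rM : PM × VM → PM × VM → Prop := twMorRel A (fun φ f => rMor φ f) with hrMdef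
  -- rO and rM are equivalence relations
  have hOrefl : ∀ a, rO a a := fun a =>
    ⟨1, by simp [Prod.ext_iff, inv_one, A.objAct_one, rObj_one]⟩
  have hOsymm : ∀ a b, rO a b → rO b a := by
    rintro a b ⟨k, rfl⟩
    exact ⟨k⁻¹, by simp [Prod.ext_iff, ← A.objAct_mul, ← rObj_mul, A.objAct_one, rObj_one]⟩
  have hOtrans : ∀ a b c, rO a b → rO b c → rO a c := by
    rintro a b c ⟨k, rfl⟩ ⟨k', rfl⟩
    exact ⟨k * k', by simp [Prod.ext_iff, A.objAct_mul, rObj_mul, mul_inv_rev]⟩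
  have hMrefl : ∀ a, rM a a := fun a =>
    ⟨1, by simp [Prod.ext_iff, inv_one, A.morAct_one, rMor_one]⟩
  have hMsymm : ∀ a b, rM a b → rM b a := by
    rintro a b ⟨φ, rfl⟩
    exact ⟨φ⁻¹, by simp [Prod.ext_iff, ← A.morAct_mul, ← rMor_mul, A.morAct_one, rMor_one]⟩
  have hMtrans : ∀ a b c, rM a b → rM b c → rM a c := by
    rintro a b c ⟨φ, rfl⟩ ⟨φ', rfl⟩
    exact ⟨φ * φ', by simp [Prod.ext_iff, A.morAct_mul, rMor_mul, mul_inv_rev]⟩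
  have hOeqv : Equivalence rO := ⟨hOrefl, fun {a b} => hOsymm a b, fun {a b c} => hOtrans a b c⟩
  have hMeqv : Equivalence rM := ⟨hMrefl, fun {a b} => hMsymm a b, fun {a b c} => hMtrans a b c⟩
  have exactO : ∀ a b, Quot.mk rO a = Quot.mk rO b → rO a b := fun a b h =>
    (hOeqv.eqvGen_iff).1 (Quot.eq.1 h)
  have exactM : ∀ a b, Quot.mk rM a = Quot.mk rM b → rM a b := fun a b h =>
    (hMeqv.eqvGen_iff).1 (Quot.eq.1 h)
  -- well-definedness of source, target, identity
  have sWD : ∀ a b : PM × VM, rM a b →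
      Quot.mk rO (P.s a.1, V.s a.2) = Quot.mk rO (P.s b.1, V.s b.2) := by
    rintro a b ⟨φ, rfl⟩
    exact Quot.sound ⟨Z.s φ, by simp [Prod.ext_iff, A.s_act, r_s, map_inv]⟩
  have tWD : ∀ a b : PM × VM, rM a b →
      Quot.mk rO (P.t a.1, V.t a.2) = Quot.mk rO (P.t b.1, V.t b.2) := by
    rintro a b ⟨φ, rfl⟩
    exact Quot.sound ⟨Z.t φ, by simp [Prod.ext_iff, A.t_act, r_t, map_inv]⟩
  have eWD : ∀ a b : PO × VO, rO a b →
      Quot.mk rM (P.e a.1, V.e a.2) = Quot.mk rM (P.e b.1, V.e b.2) := by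
    rintro a b ⟨k, rfl⟩
    exact Quot.sound ⟨Z.e k, by simp [Prod.ext_iff, A.e_act, ← map_inv, r_e]⟩
  -- categorical-group facts
  have Zcomp_one : Z.comp 1 1 = (1 : ZM) := by
    have h := Z.comp_e 1
    rwa [map_one, map_one] at h
  have Zcomp_inv : ∀ φ ψ : ZM, Z.t φ = Z.s ψ → (Z.comp ψ φ)⁻¹ = Z.comp ψ⁻¹ φ⁻¹ := by
    intro φ ψ h
    have h2 : Z.t φ⁻¹ = Z.s ψ⁻¹ := by rw [map_inv, map_inv, h]
    have hx := Z.exchange ψ φ ψ⁻¹ φ⁻¹ h h2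
    rw [mul_inv_cancel, mul_inv_cancel, Zcomp_one] at hx
    exact inv_eq_of_mul_eq_one_right hx.symm
  -- key well-definedness of composition
  have keyWD : ∀ (H : PM) (h : VM) (F : PM) (f : VM) (ψ φ : ZM),
      P.t F = P.s H → V.t f = V.s h →
      P.t (A.morAct F φ) = P.s (A.morAct H ψ) →
      Quot.mk rM (P.comp H F, V.comp h f)
        = Quot.mk rM (P.comp (A.morAct H ψ) (A.morAct F φ),
            V.comp (rMor ψ⁻¹ h) (rMor φ⁻¹ f)) := by
    intro H h F f ψ φ hP hV hP2
    have hts : Z.t φ = Z.s ψ := by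
      apply hObjFree (P.t F)
      rw [← A.t_act, hP2, A.s_act, hP]
    apply Quot.sound
    refine ⟨Z.comp ψ φ, ?_⟩
    have hc := A.comp_act F H φ ψ hP hts
    have hv : Z.t φ⁻¹ = Z.s ψ⁻¹ := by rw [map_inv, map_inv, hts]
    have hr := r_comp φ⁻¹ ψ⁻¹ f h hV hv
    simp only [Prod.mk.injEq]
    refine ⟨hc.symm, ?_⟩
    rw [Zcomp_inv φ ψ hts]
    exact hr.symm
  -- the composition map on quotients
  let compQ : Quot rM → Quot rM → Quot rM := fun q₂ q₁ =>
    if hc : ∃ k : ZO, (P.s q₂.out.1, V.s q₂.out.2)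
        = (A.objAct (P.t q₁.out.1) k, rObj k⁻¹ (V.t q₁.out.2)) then
      Quot.mk rM (P.comp q₂.out.1 (A.morAct q₁.out.1 (Z.e (Classical.choose hc))),
        V.comp q₂.out.2 (rMor (Z.e (Classical.choose hc))⁻¹ q₁.out.2))
    else q₂
  have comp_spec : ∀ (H : PM) (h : VM) (F : PM) (f : VM),
      P.t F = P.s H → V.t f = V.s h →
      compQ (Quot.mk rM (H, h)) (Quot.mk rM (F, f))
        = Quot.mk rM (P.comp H F, V.comp h f) := by
    intro H h F f hP hV
    obtain ⟨ψ, hψ⟩ : rM (H, h) (Quot.mk rM (H, h)).out :=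
      exactM _ _ (Quot.out_eq _).symm
    obtain ⟨φ, hφ⟩ : rM (F, f) (Quot.mk rM (F, f)).out :=
      exactM _ _ (Quot.out_eq _).symm
    have hc : ∃ k : ZO, (P.s (Quot.mk rM (H, h)).out.1, V.s (Quot.mk rM (H, h)).out.2)
        = (A.objAct (P.t (Quot.mk rM (F, f)).out.1) k,
           rObj k⁻¹ (V.t (Quot.mk rM (F, f)).out.2)) := by
      rw [hψ, hφ]
      refine ⟨(Z.t φ)⁻¹ * Z.s ψ, ?_⟩
      simp [Prod.ext_iff, A.s_act, A.t_act, r_s, r_t, map_inv, ← A.objAct_mul, ← rObj_mul,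
        mul_inv_rev, hP, hV, mul_inv_cancel_left]
    show dite _ _ _ = _
    rw [dif_pos hc]
    have hk := Classical.choose_spec hc
    set k := Classical.choose hc with hkdef
    rw [hψ, hφ] at hk ⊢
    have hk1 : P.s (A.morAct H ψ) = A.objAct (P.t (A.morAct F φ)) k :=
      congrArg Prod.fst hk
    have hP2 : P.t (A.morAct F (φ * Z.e k)) = P.s (A.morAct H ψ) := by
      rw [A.t_act, map_mul, Z.t_e, A.objAct_mul, ← A.t_act, hk1]
    simp only [← A.morAct_mul, ← rMor_mul, ← mul_inv_rev]
    exact (keyWD H h F f ψ (φ * Z.e k) hP hV hP2).symm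
  -- choosing composable representatives
  have repsLeft : ∀ (F : PM) (f : VM) (q : Quot rM),
      Quot.mk rO (P.t F, V.t f)
        = Quot.lift (fun a => Quot.mk rO (P.s a.1, V.s a.2)) sWD q →
      ∃ H h, q = Quot.mk rM (H, h) ∧ P.t F = P.s H ∧ V.t f = V.s h := by
    intro F f q
    induction q using Quot.ind with
    | _ a =>
      obtain ⟨H₀, h₀⟩ := a
      intro hq
      obtain ⟨k, hk⟩ := exactO _ _ hq
      have hk1 : P.s H₀ = A.objAct (P.t F) k := congrArg Prod.fst hk
      have hk2 : V.s h₀ = rObj k⁻¹ (V.t f) := congrArg Prod.snd hk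
      refine ⟨A.morAct H₀ (Z.e k)⁻¹, rMor (Z.e k) h₀,
        Quot.sound ⟨(Z.e k)⁻¹, by rw [inv_inv]⟩, ?_, ?_⟩
      · rw [A.s_act, map_inv, Z.s_e, hk1, ← A.objAct_mul, mul_inv_cancel, A.objAct_one]
      · rw [r_s, Z.s_e, hk2, ← rObj_mul, mul_inv_cancel, rObj_one]
  refine ⟨{
      s := Quot.lift (fun a => Quot.mk rO (P.s a.1, V.s a.2)) sWD
      t := Quot.lift (fun a => Quot.mk rO (P.t a.1, V.t a.2)) tWD
      e := Quot.lift (fun a => Quot.mk rM (P.e a.1, V.e a.2)) eWD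
      comp := compQ
      s_e := ?_
      t_e := ?_
      s_comp := ?_
      t_comp := ?_
      comp_e := ?_
      e_comp := ?_
      comp_assoc := ?_ },
    fun F f => rfl, fun F f => rfl, fun p v => rfl,
    fun F H f h hP hV => comp_spec H h F f hP hV⟩
  · intro x
    induction x using Quot.ind with
    | _ a =>
      obtain ⟨p, v⟩ := a
      show Quot.mk rO (P.s (P.e p), V.s (V.e v)) = Quot.mk rO (p, v)
      rw [P.s_e, V.s_e]
  · intro x
    induction x using Quot.ind with
    | _ a =>
      obtain ⟨p, v⟩ := a
      show Quot.mk rO (P.t (P.e p), V.t (V.e v)) = Quot.mk rO (p, v)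
      rw [P.t_e, V.t_e]
  · intro g f hgf
    induction f using Quot.ind with
    | _ a =>
      obtain ⟨F, f₁⟩ := a
      obtain ⟨H, h₁, rfl, hP, hV⟩ := repsLeft F f₁ g hgf
      rw [comp_spec H h₁ F f₁ hP hV]
      show Quot.mk rO (P.s (P.comp H F), V.s (V.comp h₁ f₁)) = Quot.mk rO (P.s F, V.s f₁)
      rw [P.s_comp H F hP, V.s_comp h₁ f₁ hV]
  · intro g f hgf
    induction f using Quot.ind with
    | _ a =>
      obtain ⟨F, f₁⟩ := a
      obtain ⟨H, h₁, rfl, hP, hV⟩ := repsLeft F f₁ g hgf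
      rw [comp_spec H h₁ F f₁ hP hV]
      show Quot.mk rO (P.t (P.comp H F), V.t (V.comp h₁ f₁)) = Quot.mk rO (P.t H, V.t h₁)
      rw [P.t_comp H F hP, V.t_comp h₁ f₁ hV]
  · intro f
    induction f using Quot.ind with
    | _ a =>
      obtain ⟨F, f₁⟩ := a
      have h1 : P.t (P.e (P.s F)) = P.s F := P.t_e _
      have h2 : V.t (V.e (V.s f₁)) = V.s f₁ := V.t_e _
      show compQ (Quot.mk rM (F, f₁)) (Quot.mk rM (P.e (P.s F), V.e (V.s f₁)))
        = Quot.mk rM (F, f₁)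
      rw [comp_spec F f₁ (P.e (P.s F)) (V.e (V.s f₁)) h1 h2, P.comp_e, V.comp_e]
  · intro f
    induction f using Quot.ind with
    | _ a =>
      obtain ⟨F, f₁⟩ := a
      have h1 : P.t F = P.s (P.e (P.t F)) := (P.s_e _).symm
      have h2 : V.t f₁ = V.s (V.e (V.t f₁)) := (V.s_e _).symm
      show compQ (Quot.mk rM (P.e (P.t F), V.e (V.t f₁))) (Quot.mk rM (F, f₁))
        = Quot.mk rM (F, f₁)
      rw [comp_spec (P.e (P.t F)) (V.e (V.t f₁)) F f₁ h1 h2, P.e_comp, V.e_comp]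
  · intro f g h hfg hgh
    induction f using Quot.ind with
    | _ a =>
      obtain ⟨F, f₁⟩ := a
      obtain ⟨G, g₁, rfl, hPFG, hVfg⟩ := repsLeft F f₁ g hfg
      obtain ⟨H, h₁, rfl, hPGH, hVgh⟩ := repsLeft G g₁ h hgh
      have hP' : P.t (P.comp G F) = P.s H := by rw [P.t_comp G F hPFG]; exact hPGH
      have hV' : V.t (V.comp g₁ f₁) = V.s h₁ := by rw [V.t_comp g₁ f₁ hVfg]; exact hVgh
      have hP'' : P.t F = P.s (P.comp H G) := by rw [P.s_comp H G hPGH]; exact hPFG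
      have hV'' : V.t f₁ = V.s (V.comp h₁ g₁) := by rw [V.s_comp h₁ g₁ hVgh]; exact hVfg
      rw [comp_spec G g₁ F f₁ hPFG hVfg,
        comp_spec H h₁ (P.comp G F) (V.comp g₁ f₁) hP' hV',
        comp_spec H h₁ G g₁ hPGH hVgh,
        comp_spec (P.comp H G) (V.comp h₁ g₁) F f₁ hP'' hV'',
        P.comp_assoc F G H hPFG hPGH, V.comp_assoc f₁ g₁ h₁ hVfg hVgh]
end
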